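/- Let P be a non-trivial Q0-like k×k pattern that contains an occurrence of the 2×2 pattern ((0,1),(1,0)) of height k−1. Then W(P) avoids P. -/

import Mathlib

/-- A 0-1 matrix `M` contains a pattern `P` if there are strictly increasing row and
column index maps embedding the 1-entries of `P` into 1-entries of `M`. -/
def Contains {m n k l : ℕ} (M : Fin m → Fin n → Bool) (P : Fin k → Fin l → Bool) : Prop :=
  ∃ r : Fin k → Fin m, ∃ c : Fin l → Fin n, StrictMono r ∧ StrictMono c ∧
    ∀ i j, P i j = true → M (r i) (c j) = true

def Avoids {m n k l : ℕ} (M : Fin m → Fin n → Bool) (P : Fin k → Fin l → Bool) : Prop :=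
  ¬ Contains M P

/-- The matrix obtained from `M` by changing the entry at `(i, j)` to 1. -/
def SetOne {m n : ℕ} (M : Fin m → Fin n → Bool) (i : Fin m) (j : Fin n) :
    Fin m → Fin n → Bool :=
  fun i' j' => if i' = i ∧ j' = j then true else M i' j'

def ExpandableRow {m n k l : ℕ} (M : Fin m → Fin n → Bool) (P : Fin k → Fin l → Bool)
    (i : Fin m) : Prop :=
  (∀ j, M i j = false) ∧ ∀ j, Contains (SetOne M i j) P

def ExpandableCol {m n k l : ℕ} (M : Fin m → Fin n → Bool) (P : Fin k → Fin l → Bool)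
    (j : Fin n) : Prop :=
  (∀ i, M i j = false) ∧ ∀ i, Contains (SetOne M i j) P

def Saturated {m n k l : ℕ} (M : Fin m → Fin n → Bool) (P : Fin k → Fin l → Bool) : Prop :=
  Avoids M P ∧ ∀ i j, M i j = false → Contains (SetOne M i j) P

def IsWitness {m n k l : ℕ} (M : Fin m → Fin n → Bool) (P : Fin k → Fin l → Bool) : Prop :=
  Avoids M P ∧ (∃ i, ExpandableRow M P i) ∧ (∃ j, ExpandableCol M P j)

def HorizontalWitness {m n k l : ℕ} (M : Fin m → Fin n → Bool)
    (P : Fin k → Fin l → Bool) : Prop :=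
  Avoids M P ∧ ∃ j, ExpandableCol M P j

def VerticalWitness {m n k l : ℕ} (M : Fin m → Fin n → Bool)
    (P : Fin k → Fin l → Bool) : Prop :=
  Avoids M P ∧ ∃ i, ExpandableRow M P i

/-- `P` is once-separable: block form `((A,0),(0,B))` or `((0,A),(B,0))` with `A`, `B` nonzero. -/
def OnceSeparable {k l : ℕ} (P : Fin k → Fin l → Bool) : Prop :=
  ∃ a b : ℕ, a ≤ k ∧ b ≤ l ∧
    (((∀ i j, P i j = true → ((i.val < a ∧ j.val < b) ∨ (a ≤ i.val ∧ b ≤ j.val))) ∧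
      (∃ i j, i.val < a ∧ j.val < b ∧ P i j = true) ∧
      (∃ i j, a ≤ i.val ∧ b ≤ j.val ∧ P i j = true)) ∨
     ((∀ i j, P i j = true → ((i.val < a ∧ b ≤ j.val) ∨ (a ≤ i.val ∧ j.val < b))) ∧
      (∃ i j, i.val < a ∧ b ≤ j.val ∧ P i j = true) ∧
      (∃ i j, a ≤ i.val ∧ j.val < b ∧ P i j = true)))

def NoEmptyRowCol {k l : ℕ} (P : Fin k → Fin l → Bool) : Prop :=
  (∀ i, ∃ j, P i j = true) ∧ (∀ j, ∃ i, P i j = true)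

def IsPermMatrix {k : ℕ} (P : Fin k → Fin k → Bool) : Prop :=
  (∀ i, ∃! j, P i j = true) ∧ (∀ j, ∃! i, P i j = true)

/-- `P` is non-trivial: it has a row whose only 1-entry is leftmost, a row whose only
1-entry is rightmost, a column whose only 1-entry is topmost, and a column whose only
1-entry is bottommost. -/
def NonTrivial {k l : ℕ} (P : Fin k → Fin l → Bool) : Prop :=
  (∃ i, ∀ j, (P i j = true ↔ j.val = 0)) ∧
  (∃ i, ∀ j, (P i j = true ↔ j.val = l - 1)) ∧
  (∃ j, ∀ i, (P i j = true ↔ i.val = 0)) ∧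
  (∃ j, ∀ i, (P i j = true ↔ i.val = k - 1))

/-- The two-copy witness construction `W(P)` (0-based indices; `s < t` are the 0-based
rows of the leftmost and rightmost 1-entries of `P`). -/
def WP {k : ℕ} (P : Fin k → Fin k → Bool) (s t : ℕ) :
    Fin (k + (t - s)) → Fin (2 * k - 2) → Bool :=
  fun i j =>
    if h : j.val < k - 1 ∧ i.val < k then P ⟨i.val, h.2⟩ ⟨j.val, by omega⟩
    else if h2 : k - 1 ≤ j.val ∧ t - s ≤ i.val ∧ i.val - (t - s) < k ∧ j.val - (k - 2) < k then
      P ⟨i.val - (t - s), h2.2.2.1⟩ ⟨j.val - (k - 2), h2.2.2.2⟩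
    else false

set_option maxHeartbeats 2000000

lemma smono_gap {n m : ℕ} {f : Fin n → Fin m} (hf : StrictMono f) :
    ∀ (g x : ℕ) (hx : x < n) (hxg : x + g < n),
      (f ⟨x, hx⟩).val + g ≤ (f ⟨x + g, hxg⟩).val := by
  intro g
  induction g with
  | zero =>
    intro x hx hxg
    have e : (⟨x + 0, hxg⟩ : Fin n) = ⟨x, hx⟩ := Fin.ext (show x + 0 = x by omega)
    rw [e]
    omega
  | succ p ih =>
    intro x hx hxg
    have hp : x + p < n := by omega
    have h1 := ih x hx hp
    have hlt : (⟨x + p, hp⟩ : Fin n) < ⟨x + (p+1), hxg⟩ := by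
      rw [Fin.lt_def]; exact (show x + p < x + (p+1) by omega)
    have h2 := hf hlt
    rw [Fin.lt_def] at h2
    have h2' : (f ⟨x + p, hp⟩).val < (f ⟨x + (p+1), hxg⟩).val := h2
    omega

lemma WP_left {k : ℕ} {P : Fin k → Fin k → Bool} {s t : ℕ} {x : Fin (k + (t - s))}
    {y : Fin (2 * k - 2)} (h : WP P s t x y = true) (hy : y.val < k - 1) :
    ∃ hx : x.val < k, P ⟨x.val, hx⟩ ⟨y.val, by omega⟩ = true := by
  unfold WP at h
  split_ifs at h with h1 h2
  · exact ⟨h1.2, h⟩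
  · exact absurd h2.1 (by omega)

lemma WP_right {k : ℕ} {P : Fin k → Fin k → Bool} {s t : ℕ} {x : Fin (k + (t - s))}
    {y : Fin (2 * k - 2)} (h : WP P s t x y = true) (hy : k - 1 ≤ y.val) :
    ∃ (h1 : t - s ≤ x.val) (h2 : x.val - (t - s) < k) (h3 : y.val - (k - 2) < k),
      P ⟨x.val - (t - s), h2⟩ ⟨y.val - (k - 2), h3⟩ = true := by
  unfold WP at h
  split_ifs at h with h1 h2
  · exact absurd h1.1 (by omega)
  · exact ⟨h2.2.1, h2.2.2.1, h2.2.2.2, h⟩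

lemma WP_left_intro {k : ℕ} (P : Fin k → Fin k → Bool) (s t : ℕ) (x : Fin (k + (t - s)))
    (y : Fin (2 * k - 2)) (hx : x.val < k) (hy : y.val < k - 1)
    (h : P ⟨x.val, hx⟩ ⟨y.val, by omega⟩ = true) : WP P s t x y = true := by
  unfold WP
  rw [dif_pos ⟨hy, hx⟩]
  exact h

lemma WP_right_intro {k : ℕ} (P : Fin k → Fin k → Bool) (s t : ℕ) (x : Fin (k + (t - s)))
    (y : Fin (2 * k - 2)) (hy : k - 1 ≤ y.val) (h1 : t - s ≤ x.val)
    (h2 : x.val - (t - s) < k) (h3 : y.val - (k - 2) < k)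
    (h : P ⟨x.val - (t - s), h2⟩ ⟨y.val - (k - 2), h3⟩ = true) : WP P s t x y = true := by
  unfold WP
  rw [dif_neg (by omega), dif_pos ⟨hy, h1, h2, h3⟩]
  exact h

lemma core {k : ℕ} (P : Fin k → Fin k → Bool) (a b s t : ℕ)
    (hs : 0 < s) (hst : s < t) (htk : t < k - 1)
    (ha : 0 < a) (hab : a < b) (hbk : b < k - 1)
    (hk0' : 0 < k) (hkk1' : k - 1 < k)
    (F5 : ∀ j : Fin k, P ⟨0, hk0'⟩ j = true ↔ j.val = a)
    (F6 : ∀ j : Fin k, P ⟨k - 1, hkk1'⟩ j = true ↔ j.val = b)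
    (F3 : ∀ j : Fin k, P ⟨s, by omega⟩ j = true ↔ j.val = 0)
    (F4 : ∀ j : Fin k, P ⟨t, by omega⟩ j = true ↔ j.val = k - 1)
    (jB : ℕ) (hjBk : jB < k) (hjBa : jB < a)
    (hPB : P ⟨k - 2, by omega⟩ ⟨jB, hjBk⟩ = true)
    (hcont : Contains (WP P s t) P) : False := by
  have hk : 4 ≤ k := by omega
  have hk0 : 0 < k := by omega
  have hk1 : 1 < k := by omega
  have hks : s < k := by omega
  have hks1 : s + 1 < k := by omega
  have hkt : t < k := by omega
  have hkk2 : k - 2 < k := by omega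
  have hkk1 : k - 1 < k := by omega
  have hka : a < k := by omega
  have hkb : b < k := by omega
  obtain ⟨r, c, hrm, hcm, hmap⟩ := hcont
  -- gap facts
  have rgap : ∀ (x y : ℕ) (hx : x < k) (hy : y < k), x ≤ y →
      (r ⟨x, hx⟩).val + (y - x) ≤ (r ⟨y, hy⟩).val := by
    intro x y hx hy hxy
    have h := smono_gap hrm (y - x) x hx (by omega)
    have e : (⟨x + (y - x), by omega⟩ : Fin k) = ⟨y, hy⟩ := Fin.ext (show x + (y-x) = y by omega)
    rw [e] at h
    omega
  have cgap : ∀ (x y : ℕ) (hx : x < k) (hy : y < k), x ≤ y →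
      (c ⟨x, hx⟩).val + (y - x) ≤ (c ⟨y, hy⟩).val := by
    intro x y hx hy hxy
    have h := smono_gap hcm (y - x) x hx (by omega)
    have e : (⟨x + (y - x), by omega⟩ : Fin k) = ⟨y, hy⟩ := Fin.ext (show x + (y-x) = y by omega)
    rw [e] at h
    omega
  have rlo : ∀ (x : ℕ) (hx : x < k), x ≤ (r ⟨x, hx⟩).val := by
    intro x hx
    have h := rgap 0 x hk0 hx (by omega)
    omega
  have rhi : ∀ (x : ℕ) (hx : x < k), (r ⟨x, hx⟩).val ≤ x + (t - s) := by
    intro x hx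
    have h1 := rgap x (k-1) hx hkk1 (by omega)
    have h2 := (r ⟨k-1, hkk1⟩).isLt
    omega
  have clo : ∀ (x : ℕ) (hx : x < k), x ≤ (c ⟨x, hx⟩).val := by
    intro x hx
    have h := cgap 0 x hk0 hx (by omega)
    omega
  have chi : ∀ (x : ℕ) (hx : x < k), (c ⟨x, hx⟩).val ≤ x + (k - 2) := by
    intro x hx
    have h1 := cgap x (k-1) hx hkk1 (by omega)
    have h2 := (c ⟨k-1, hkk1⟩).isLt
    omega
  -- the four special entries
  have hPt : P ⟨t, hkt⟩ ⟨k-1, hkk1⟩ = true := (F4 ⟨k-1, hkk1⟩).mpr rfl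
  have hPs : P ⟨s, hks⟩ ⟨0, hk0⟩ = true := (F3 ⟨0, hk0⟩).mpr rfl
  have hP0 : P ⟨0, hk0⟩ ⟨a, hka⟩ = true := (F5 ⟨a, hka⟩).mpr rfl
  have hPk : P ⟨k-1, hkk1⟩ ⟨b, hkb⟩ = true := (F6 ⟨b, hkb⟩).mpr rfl
  -- A1 : r t ≥ t + 1
  have hyk1 : k - 1 ≤ (c ⟨k-1, hkk1⟩).val := by have := clo (k-1) hkk1; omega
  obtain ⟨hA1a, hA1b, hA1c, hA1P⟩ := WP_right (hmap _ _ hPt) hyk1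
  have hrt : t + 1 ≤ (r ⟨t, hkt⟩).val := by
    by_contra hcon
    have hrtl := rlo t hkt
    have e : (⟨(r ⟨t, hkt⟩).val - (t - s), hA1b⟩ : Fin k) = ⟨s, hks⟩ :=
      Fin.ext (show (r ⟨t, hkt⟩).val - (t - s) = s by omega)
    rw [e] at hA1P
    have h0 : (c ⟨k-1, hkk1⟩).val - (k - 2) = 0 := (F3 _).mp hA1P
    omega
  -- A2 : r s ≤ t - 1
  have hc0 : (c ⟨0, hk0⟩).val ≤ k - 2 := by have := chi 0 hk0; omega
  obtain ⟨hx2, hA2P⟩ := WP_left (hmap _ _ hPs) (show (c ⟨0, hk0⟩).val < k - 1 by omega)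
  have hrs_le : (r ⟨s, hks⟩).val ≤ t - 1 := by
    by_contra hcon
    have h1 := rhi s hks
    have e : (⟨(r ⟨s, hks⟩).val, hx2⟩ : Fin k) = ⟨t, hkt⟩ :=
      Fin.ext (show (r ⟨s, hks⟩).val = t by omega)
    rw [e] at hA2P
    have h2 : (c ⟨0, hk0⟩).val = k - 1 := (F4 _).mp hA2P
    omega
  -- A3 : c a ≤ k - 2 and P (r 0) (c a) = 1
  have hca : (c ⟨a, hka⟩).val ≤ k - 2 := by
    by_contra hcon
    obtain ⟨g1, g2, g3, _⟩ := WP_right (hmap _ _ hP0) (by omega)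
    have h1 := rgap 0 s hk0 hks (by omega)
    have h2 := rhi 0 hk0
    omega
  obtain ⟨hx3, hA3P⟩ := WP_left (hmap _ _ hP0) (by omega)
  -- A4 : c b ≥ k - 1
  have hcb : k - 1 ≤ (c ⟨b, hkb⟩).val := by
    by_contra hcon
    obtain ⟨hx4, hA4P⟩ := WP_left (hmap _ _ hPk) (by omega)
    have h1 := rlo (k-1) hkk1
    have h2 := rgap t (k-1) hkt hkk1 (by omega)
    omega
  -- A5 : c jB = b , r (k-2) = k-1
  have hcjB_lt : (c ⟨jB, hjBk⟩).val < (c ⟨a, hka⟩).val := by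
    have := cgap jB a hjBk hka (by omega)
    omega
  obtain ⟨hx5, hA5P⟩ := WP_left (hmap _ _ hPB) (by omega)
  have hrk2 : (r ⟨k-2, hkk2⟩).val = k - 1 := by
    have h1 := rgap t (k-2) hkt hkk2 (by omega)
    omega
  have e5 : (⟨(r ⟨k-2, hkk2⟩).val, hx5⟩ : Fin k) = ⟨k-1, hkk1⟩ := Fin.ext hrk2
  rw [e5] at hA5P
  have hcjB : (c ⟨jB, hjBk⟩).val = b := (F6 _).mp hA5P
  -- r 0 = 1
  have hr0 : (r ⟨0, hk0⟩).val = 1 := by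
    rcases Nat.lt_or_ge (r ⟨0, hk0⟩).val 1 with h0 | h1
    · exfalso
      have e : (⟨(r ⟨0, hk0⟩).val, hx3⟩ : Fin k) = ⟨0, hk0⟩ :=
        Fin.ext (show (r ⟨0, hk0⟩).val = 0 by omega)
      rw [e] at hA3P
      have hcaa : (c ⟨a, hka⟩).val = a := (F5 _).mp hA3P
      omega
    · have h2 := rgap 0 (k-2) hk0 hkk2 (by omega)
      omega
  -- r s = s + 1, d ≥ 2
  have hrs : (r ⟨s, hks⟩).val = s + 1 := by
    have h1 := rgap 0 s hk0 hks (by omega)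
    have h2 := rgap s (k-2) hks hkk2 (by omega)
    omega
  have hd2 : s + 2 ≤ t := by omega
  -- A7 : P (s+1) (c 0) = 1
  have e7 : (⟨(r ⟨s, hks⟩).val, hx2⟩ : Fin k) = ⟨s+1, hks1⟩ := Fin.ext hrs
  rw [e7] at hA2P
  -- A8 : d ≤ 2
  have e8 : (⟨(r ⟨0, hk0⟩).val, hx3⟩ : Fin k) = ⟨1, hk1⟩ := Fin.ext hr0
  rw [e8] at hA3P
  have hr1 : (r ⟨1, hk1⟩).val = 2 := by
    have h1 := rgap 0 1 hk0 hk1 (by omega)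
    have h2 := rgap 1 (k-2) hk1 hkk2 (by omega)
    omega
  have hcak : (c ⟨a, hka⟩).val < k := by omega
  have hA3P' : P ⟨1, hk1⟩ ⟨(c ⟨a, hka⟩).val, hcak⟩ = true := hA3P
  obtain ⟨g1, g2, g3, _⟩ := WP_right (hmap _ _ hA3P')
    (by
      have hbca : b ≤ (c ⟨a, hka⟩).val := by omega
      have := cgap b ((c ⟨a, hka⟩).val) hkb hcak hbca
      omega)
  have hts : t = s + 2 := by omega
  -- A9
  have hrs1 : (r ⟨s+1, hks1⟩).val = s + 2 := by
    have h1 := rgap s (s+1) hks hks1 (by omega)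
    have h2 := rgap (s+1) (k-2) hks1 hkk2 (by omega)
    omega
  have hc0k : (c ⟨0, hk0⟩).val < k := by omega
  have hA7 : P ⟨s+1, hks1⟩ ⟨(c ⟨0, hk0⟩).val, hc0k⟩ = true := hA2P
  have W9 := hmap _ _ hA7
  by_cases h9 : (c ⟨(c ⟨0, hk0⟩).val, hc0k⟩).val < k - 1
  · obtain ⟨hx9, hA9P⟩ := WP_left W9 h9
    have e9 : (⟨(r ⟨s+1, hks1⟩).val, hx9⟩ : Fin k) = ⟨t, hkt⟩ :=
      Fin.ext (show (r ⟨s+1, hks1⟩).val = t by omega)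
    rw [e9] at hA9P
    have h10 : (c ⟨(c ⟨0, hk0⟩).val, hc0k⟩).val = k - 1 := (F4 _).mp hA9P
    omega
  · obtain ⟨g1', g2', g3', hA9P⟩ := WP_right W9 (by omega)
    have e9 : (⟨(r ⟨s+1, hks1⟩).val - (t - s), g2'⟩ : Fin k) = ⟨s, hks⟩ :=
      Fin.ext (show (r ⟨s+1, hks1⟩).val - (t - s) = s by omega)
    rw [e9] at hA9P
    have h10 : (c ⟨(c ⟨0, hk0⟩).val, hc0k⟩).val - (k - 2) = 0 := (F3 _).mp hA9P
    omega

theorem stmt13 {k : ℕ} (P : Fin k → Fin k → Bool) (a b s t : ℕ)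
    (hs : 0 < s) (hst : s < t) (htk : t < k - 1)
    (ha : 0 < a) (hab : a < b) (hbk : b < k - 1)
    (hnt : NonTrivial P) (hP : NoEmptyRowCol P)
    (hrow0 : ∀ j : Fin k, (P ⟨0, by omega⟩ j = true ↔ j.val = a))
    (hrowlast : ∀ j : Fin k, (P ⟨k - 1, by omega⟩ j = true ↔ j.val = b))
    (hcol0 : ∀ i : Fin k, (P i ⟨0, by omega⟩ = true ↔ i.val = s))
    (hcollast : ∀ i : Fin k, (P i ⟨k - 1, by omega⟩ = true ↔ i.val = t))
    (hocc : ∃ iB iT jB jT : Fin k, P iB jB = true ∧ P iT jT = true ∧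
      iT < iB ∧ jB < jT ∧ iB.val = iT.val + (k - 2)) :
    Avoids (WP P s t) P := by
  intro hcont
  have hk : 4 ≤ k := by omega
  have hk0 : 0 < k := by omega
  have hk1 : 1 < k := by omega
  have hks : s < k := by omega
  have hkt : t < k := by omega
  have hkk2 : k - 2 < k := by omega
  have hkk1 : k - 1 < k := by omega
  -- row s is unique with entry at column 0
  obtain ⟨⟨i1, hi1⟩, ⟨i2, hi2⟩, -, -⟩ := hnt
  have hi1s : i1.val = s := (hcol0 i1).mp ((hi1 ⟨0, hk0⟩).mpr rfl)
  have F3o : ∀ j : Fin k, P ⟨s, hks⟩ j = true ↔ j.val = 0 := by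
    intro j
    have e : i1 = ⟨s, hks⟩ := Fin.ext hi1s
    rw [← e]
    exact hi1 j
  have hi2t : i2.val = t := (hcollast i2).mp ((hi2 ⟨k-1, hkk1⟩).mpr rfl)
  have F4o : ∀ j : Fin k, P ⟨t, hkt⟩ j = true ↔ j.val = k - 1 := by
    intro j
    have e : i2 = ⟨t, hkt⟩ := Fin.ext hi2t
    rw [← e]
    exact hi2 j
  obtain ⟨iB, iT, jBo, jTo, hB, hT, hiTB, hjBT, hsum⟩ := hocc
  have hiBk := iB.isLt
  have hiT01 : iT.val = 0 ∨ iT.val = 1 := by omega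
  rcases hiT01 with h0 | h1
  · -- Case A : iT = 0
    have eT : iT = ⟨0, hk0⟩ := Fin.ext h0
    rw [eT] at hT
    have hjTa : jTo.val = a := (hrow0 jTo).mp hT
    have eB : iB = ⟨k-2, hkk2⟩ := Fin.ext (show iB.val = k - 2 by omega)
    rw [eB] at hB
    have hjBlt : jBo.val < a := by
      have : jBo.val < jTo.val := hjBT
      omega
    have hB' : P ⟨k-2, hkk2⟩ ⟨jBo.val, jBo.isLt⟩ = true := by
      have e : jBo = ⟨jBo.val, jBo.isLt⟩ := Fin.ext rfl
      rw [← e]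
      exact hB
    exact core P a b s t hs hst htk ha hab hbk hk0 hkk1 hrow0 hrowlast F3o F4o
      jBo.val jBo.isLt hjBlt hB' hcont
  · -- Case B : iT = 1, iB = k - 1 ; rotate 180°
    have eB : iB = ⟨k-1, hkk1⟩ := Fin.ext (show iB.val = k - 1 by omega)
    rw [eB] at hB
    have hjBb : jBo.val = b := (hrowlast jBo).mp hB
    have eT : iT = ⟨1, hk1⟩ := Fin.ext h1
    rw [eT] at hT
    have hjTgt : b < jTo.val := by
      have : jBo.val < jTo.val := hjBT
      omega
    have hidx : ∀ x : ℕ, x < k → k - 1 - x < k := by omega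
    -- rotated matrix
    set Q : Fin k → Fin k → Bool :=
      fun i j => P ⟨k - 1 - i.val, hidx _ i.isLt⟩ ⟨k - 1 - j.val, hidx _ j.isLt⟩ with hQ
    -- rotated Contains
    have hcont' : Contains (WP Q (k-1-t) (k-1-s)) Q := by
      obtain ⟨r, c, hrm, hcm, hmap⟩ := hcont
      refine ⟨fun i => ⟨k + (t - s) - 1 - (r ⟨k - 1 - i.val, hidx _ i.isLt⟩).val, by omega⟩,
              fun j => ⟨2 * k - 3 - (c ⟨k - 1 - j.val, hidx _ j.isLt⟩).val, by
                have := (c ⟨k - 1 - j.val, hidx _ j.isLt⟩).isLt; omega⟩, ?_, ?_, ?_⟩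
      · intro i1' i2' h12
        have h12' : i1'.val < i2'.val := h12
        have hab' : (⟨k - 1 - i2'.val, hidx _ i2'.isLt⟩ : Fin k) < ⟨k - 1 - i1'.val, hidx _ i1'.isLt⟩ := by
          rw [Fin.lt_def]
          exact (show k - 1 - i2'.val < k - 1 - i1'.val by
            have := i2'.isLt; omega)
        have h3 := hrm hab'
        rw [Fin.lt_def] at h3
        have h3' : (r ⟨k - 1 - i2'.val, hidx _ i2'.isLt⟩).val < (r ⟨k - 1 - i1'.val, hidx _ i1'.isLt⟩).val := h3
        have h4 := (r ⟨k - 1 - i1'.val, hidx _ i1'.isLt⟩).isLt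
        simp only [Fin.mk_lt_mk]
        omega
      · intro j1' j2' h12
        have h12' : j1'.val < j2'.val := h12
        have hab' : (⟨k - 1 - j2'.val, hidx _ j2'.isLt⟩ : Fin k) < ⟨k - 1 - j1'.val, hidx _ j1'.isLt⟩ := by
          rw [Fin.lt_def]
          exact (show k - 1 - j2'.val < k - 1 - j1'.val by
            have := j2'.isLt; omega)
        have h3 := hcm hab'
        rw [Fin.lt_def] at h3
        have h3' : (c ⟨k - 1 - j2'.val, hidx _ j2'.isLt⟩).val < (c ⟨k - 1 - j1'.val, hidx _ j1'.isLt⟩).val := h3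
        have h4 := (c ⟨k - 1 - j1'.val, hidx _ j1'.isLt⟩).isLt
        simp only [Fin.mk_lt_mk]
        omega
      · intro i j hij
        have hij' : P ⟨k - 1 - i.val, hidx _ i.isLt⟩ ⟨k - 1 - j.val, hidx _ j.isLt⟩ = true := hij
        have W1 := hmap _ _ hij'
        have hXlt := (r ⟨k - 1 - i.val, hidx _ i.isLt⟩).isLt
        have hYlt := (c ⟨k - 1 - j.val, hidx _ j.isLt⟩).isLt
        by_cases hY : (c ⟨k - 1 - j.val, hidx _ j.isLt⟩).val < k - 1
        · obtain ⟨hXk, hPL⟩ := WP_left W1 hY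
          refine WP_right_intro Q (k-1-t) (k-1-s) _ _
            (show k - 1 ≤ 2 * k - 3 - (c ⟨k - 1 - j.val, hidx _ j.isLt⟩).val by omega)
            (show (k-1-s) - (k-1-t) ≤ k + (t - s) - 1 - (r ⟨k - 1 - i.val, hidx _ i.isLt⟩).val by omega)
            (show _ < k by omega) (show _ < k by omega) ?_
          show Q ⟨k + (t - s) - 1 - (r ⟨k - 1 - i.val, hidx _ i.isLt⟩).val - ((k-1-s) - (k-1-t)), by omega⟩
               ⟨2 * k - 3 - (c ⟨k - 1 - j.val, hidx _ j.isLt⟩).val - (k - 2), by omega⟩ = true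
          show P ⟨k - 1 - (k + (t - s) - 1 - (r ⟨k - 1 - i.val, hidx _ i.isLt⟩).val - ((k-1-s) - (k-1-t))), _⟩
               ⟨k - 1 - (2 * k - 3 - (c ⟨k - 1 - j.val, hidx _ j.isLt⟩).val - (k - 2)), _⟩ = true
          have e1 : (⟨k - 1 - (k + (t - s) - 1 - (r ⟨k - 1 - i.val, hidx _ i.isLt⟩).val - ((k-1-s) - (k-1-t))), hidx _ (by omega)⟩ : Fin k)
              = ⟨(r ⟨k - 1 - i.val, hidx _ i.isLt⟩).val, hXk⟩ := by
            apply Fin.ext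
            exact (show k - 1 - (k + (t - s) - 1 - (r ⟨k - 1 - i.val, hidx _ i.isLt⟩).val - ((k-1-s) - (k-1-t)))
              = (r ⟨k - 1 - i.val, hidx _ i.isLt⟩).val by omega)
          have e2 : (⟨k - 1 - (2 * k - 3 - (c ⟨k - 1 - j.val, hidx _ j.isLt⟩).val - (k - 2)), hidx _ (by omega)⟩ : Fin k)
              = ⟨(c ⟨k - 1 - j.val, hidx _ j.isLt⟩).val, by omega⟩ := by
            apply Fin.ext
            exact (show k - 1 - (2 * k - 3 - (c ⟨k - 1 - j.val, hidx _ j.isLt⟩).val - (k - 2))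
              = (c ⟨k - 1 - j.val, hidx _ j.isLt⟩).val by omega)
          rw [e1, e2]
          exact hPL
        · obtain ⟨g1, g2, g3, hPR⟩ := WP_right W1 (by omega)
          refine WP_left_intro Q (k-1-t) (k-1-s) _ _
            (show k + (t - s) - 1 - (r ⟨k - 1 - i.val, hidx _ i.isLt⟩).val < k by omega)
            (show 2 * k - 3 - (c ⟨k - 1 - j.val, hidx _ j.isLt⟩).val < k - 1 by omega) ?_
          show Q ⟨k + (t - s) - 1 - (r ⟨k - 1 - i.val, hidx _ i.isLt⟩).val, by omega⟩
               ⟨2 * k - 3 - (c ⟨k - 1 - j.val, hidx _ j.isLt⟩).val, by omega⟩ = true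
          show P ⟨k - 1 - (k + (t - s) - 1 - (r ⟨k - 1 - i.val, hidx _ i.isLt⟩).val), _⟩
               ⟨k - 1 - (2 * k - 3 - (c ⟨k - 1 - j.val, hidx _ j.isLt⟩).val), _⟩ = true
          have e1 : (⟨k - 1 - (k + (t - s) - 1 - (r ⟨k - 1 - i.val, hidx _ i.isLt⟩).val), hidx _ (by omega)⟩ : Fin k)
              = ⟨(r ⟨k - 1 - i.val, hidx _ i.isLt⟩).val - (t - s), g2⟩ := by
            apply Fin.ext
            exact (show k - 1 - (k + (t - s) - 1 - (r ⟨k - 1 - i.val, hidx _ i.isLt⟩).val)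
              = (r ⟨k - 1 - i.val, hidx _ i.isLt⟩).val - (t - s) by omega)
          have e2 : (⟨k - 1 - (2 * k - 3 - (c ⟨k - 1 - j.val, hidx _ j.isLt⟩).val), hidx _ (by omega)⟩ : Fin k)
              = ⟨(c ⟨k - 1 - j.val, hidx _ j.isLt⟩).val - (k - 2), g3⟩ := by
            apply Fin.ext
            exact (show k - 1 - (2 * k - 3 - (c ⟨k - 1 - j.val, hidx _ j.isLt⟩).val)
              = (c ⟨k - 1 - j.val, hidx _ j.isLt⟩).val - (k - 2) by omega)
          rw [e1, e2]
          exact hPR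
    -- transported unique-row/col facts
    have F5' : ∀ j : Fin k, Q ⟨0, hk0⟩ j = true ↔ j.val = k - 1 - b := by
      intro j
      have hjk := j.isLt
      constructor
      · intro h
        have h' : P ⟨k - 1 - 0, hidx _ hk0⟩ ⟨k - 1 - j.val, hidx _ j.isLt⟩ = true := h
        have e : (⟨k - 1 - 0, hidx _ hk0⟩ : Fin k) = ⟨k-1, hkk1⟩ := Fin.ext (show k - 1 - 0 = k - 1 by omega)
        rw [e] at h'
        have := (hrowlast _).mp h'
        have h2 : k - 1 - j.val = b := this
        omega
      · intro h
        show P ⟨k - 1 - 0, hidx _ hk0⟩ ⟨k - 1 - j.val, hidx _ j.isLt⟩ = true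
        have e : (⟨k - 1 - 0, hidx _ hk0⟩ : Fin k) = ⟨k-1, hkk1⟩ := Fin.ext (show k - 1 - 0 = k - 1 by omega)
        rw [e]
        exact (hrowlast _).mpr (show k - 1 - j.val = b by omega)
    have F6' : ∀ j : Fin k, Q ⟨k-1, hkk1⟩ j = true ↔ j.val = k - 1 - a := by
      intro j
      have hjk := j.isLt
      constructor
      · intro h
        have h' : P ⟨k - 1 - (k-1), hidx _ hkk1⟩ ⟨k - 1 - j.val, hidx _ j.isLt⟩ = true := h
        have e : (⟨k - 1 - (k-1), hidx _ hkk1⟩ : Fin k) = ⟨0, hk0⟩ := Fin.ext (show k - 1 - (k-1) = 0 by omega)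
        rw [e] at h'
        have h2 : k - 1 - j.val = a := (hrow0 _).mp h'
        omega
      · intro h
        show P ⟨k - 1 - (k-1), hidx _ hkk1⟩ ⟨k - 1 - j.val, hidx _ j.isLt⟩ = true
        have e : (⟨k - 1 - (k-1), hidx _ hkk1⟩ : Fin k) = ⟨0, hk0⟩ := Fin.ext (show k - 1 - (k-1) = 0 by omega)
        rw [e]
        exact (hrow0 _).mpr (show k - 1 - j.val = a by omega)
    have hkt' : k - 1 - t < k := by omega
    have hks' : k - 1 - s < k := by omega
    have F3' : ∀ j : Fin k, Q ⟨k-1-t, hkt'⟩ j = true ↔ j.val = 0 := by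
      intro j
      have hjk := j.isLt
      constructor
      · intro h
        have h' : P ⟨k - 1 - (k-1-t), hidx _ hkt'⟩ ⟨k - 1 - j.val, hidx _ j.isLt⟩ = true := h
        have e : (⟨k - 1 - (k-1-t), hidx _ hkt'⟩ : Fin k) = ⟨t, hkt⟩ := Fin.ext (show k - 1 - (k-1-t) = t by omega)
        rw [e] at h'
        have h2 : k - 1 - j.val = k - 1 := (F4o _).mp h'
        omega
      · intro h
        show P ⟨k - 1 - (k-1-t), hidx _ hkt'⟩ ⟨k - 1 - j.val, hidx _ j.isLt⟩ = true
        have e : (⟨k - 1 - (k-1-t), hidx _ hkt'⟩ : Fin k) = ⟨t, hkt⟩ := Fin.ext (show k - 1 - (k-1-t) = t by omega)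
        rw [e]
        exact (F4o _).mpr (show k - 1 - j.val = k - 1 by omega)
    have F4' : ∀ j : Fin k, Q ⟨k-1-s, hks'⟩ j = true ↔ j.val = k - 1 := by
      intro j
      have hjk := j.isLt
      constructor
      · intro h
        have h' : P ⟨k - 1 - (k-1-s), hidx _ hks'⟩ ⟨k - 1 - j.val, hidx _ j.isLt⟩ = true := h
        have e : (⟨k - 1 - (k-1-s), hidx _ hks'⟩ : Fin k) = ⟨s, hks⟩ := Fin.ext (show k - 1 - (k-1-s) = s by omega)
        rw [e] at h'
        have h2 : k - 1 - j.val = 0 := (F3o _).mp h'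
        omega
      · intro h
        show P ⟨k - 1 - (k-1-s), hidx _ hks'⟩ ⟨k - 1 - j.val, hidx _ j.isLt⟩ = true
        have e : (⟨k - 1 - (k-1-s), hidx _ hks'⟩ : Fin k) = ⟨s, hks⟩ := Fin.ext (show k - 1 - (k-1-s) = s by omega)
        rw [e]
        exact (F3o _).mpr (show k - 1 - j.val = 0 by omega)
    -- the occurrence entry for Q
    have hjT' : k - 1 - jTo.val < k := by omega
    have hPB' : Q ⟨k-2, by omega⟩ ⟨k - 1 - jTo.val, hjT'⟩ = true := by
      show P ⟨k - 1 - (k-2), hidx _ (by omega)⟩ ⟨k - 1 - (k - 1 - jTo.val), hidx _ hjT'⟩ = true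
      have e1 : (⟨k - 1 - (k-2), hidx _ (by omega : k - 2 < k)⟩ : Fin k) = ⟨1, hk1⟩ :=
        Fin.ext (show k - 1 - (k-2) = 1 by omega)
      have e2 : (⟨k - 1 - (k - 1 - jTo.val), hidx _ hjT'⟩ : Fin k) = jTo := by
        apply Fin.ext
        exact (show k - 1 - (k - 1 - jTo.val) = jTo.val by have := jTo.isLt; omega)
      rw [e1, e2]
      exact hT
    exact core Q (k-1-b) (k-1-a) (k-1-t) (k-1-s)
      (by omega) (by omega) (by omega) (by omega) (by omega) (by omega) hk0 hkk1
      F5' F6' F3' F4' (k - 1 - jTo.val) hjT' (by omega) hPB' hcont'
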